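/- Let n ≥ 1 and k ≥ 1 be integers. There exists a non-decreasing function h : [0,2] → [0,∞) with lim_{t→0⁺} h(t) = 0 such that for every y ∈ ℝⁿ with |y| = 1 and every x in the closed unit ball with x ≠ y, Brendle's vector field Y satisfies | Y(x) + (x−y)/|x−y|^k | ≤ h(|x−y|)/|x−y|^{k−1}. -/

import Mathlib

open Metric Set Filter
open intervalIntegral

/-- Brendle's vector field `Y(x) = x/2 − (x−y)/|x−y|^k − ((k−2)/2)·∫₀¹ (t·x − y)/|t·x − y|^k dt`. -/
noncomputable def brendleY (n k : ℕ) (y : EuclideanSpace ℝ (Fin n)) :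
    EuclideanSpace ℝ (Fin n) → EuclideanSpace ℝ (Fin n) := fun x =>
  (2 : ℝ)⁻¹ • x - (‖x - y‖ ^ k)⁻¹ • (x - y) -
    (((k : ℝ) - 2) / 2) • ∫ t in (0 : ℝ)..1, (‖t • x - y‖ ^ k)⁻¹ • (t • x - y)

lemma unitDiff {E : Type*} [NormedAddCommGroup E] [NormedSpace ℝ E] (a b : E)
    (ha : a ≠ 0) (hb : b ≠ 0) :
    ‖‖a‖⁻¹ • a - ‖b‖⁻¹ • b‖ ≤ 2 * ‖a - b‖ / ‖a‖ := by
  have ha' : (0:ℝ) < ‖a‖ := norm_pos_iff.mpr ha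
  have hb' : (0:ℝ) < ‖b‖ := norm_pos_iff.mpr hb
  have key : ‖a‖⁻¹ • a - ‖b‖⁻¹ • b = ‖a‖⁻¹ • (a - b) + (‖a‖⁻¹ - ‖b‖⁻¹) • b := by
    rw [smul_sub, sub_smul]; abel
  rw [key]
  have h1 : ‖‖a‖⁻¹ • (a - b)‖ = ‖a - b‖ / ‖a‖ := by
    rw [norm_smul, norm_inv, norm_norm]; ring
  have h3 : |‖b‖ - ‖a‖| ≤ ‖a - b‖ := by
    rw [abs_sub_comm]; exact abs_norm_sub_norm_le a b
  have h2 : ‖(‖a‖⁻¹ - ‖b‖⁻¹) • b‖ ≤ ‖a - b‖ / ‖a‖ := by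
    rw [norm_smul, Real.norm_eq_abs]
    have e1 : ‖a‖⁻¹ - ‖b‖⁻¹ = (‖b‖ - ‖a‖) / (‖a‖ * ‖b‖) := by field_simp
    rw [e1, abs_div, abs_of_pos (by positivity : (0:ℝ) < ‖a‖ * ‖b‖)]
    rw [div_mul_eq_mul_div, div_le_div_iff₀ (by positivity) ha']
    calc |‖b‖ - ‖a‖| * ‖b‖ * ‖a‖ ≤ ‖a - b‖ * ‖b‖ * ‖a‖ := by
          apply mul_le_mul_of_nonneg_right (mul_le_mul_of_nonneg_right h3 hb'.le) ha'.le
      _ = ‖a - b‖ * (‖a‖ * ‖b‖) := by ring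
  calc ‖‖a‖⁻¹ • (a - b) + (‖a‖⁻¹ - ‖b‖⁻¹) • b‖
      ≤ ‖‖a‖⁻¹ • (a - b)‖ + ‖(‖a‖⁻¹ - ‖b‖⁻¹) • b‖ := norm_add_le _ _
    _ ≤ ‖a - b‖ / ‖a‖ + ‖a - b‖ / ‖a‖ := by rw [h1]; linarith
    _ = 2 * ‖a - b‖ / ‖a‖ := by ring

lemma intBound (m : ℕ) (hm : 2 ≤ m) (d : ℝ) (hd : 0 < d) :
    (∫ t in (0:ℝ)..1, ((d + 1 - t) ^ m)⁻¹) ≤ ((d ^ (m-1))⁻¹) / ((m : ℝ) - 1) := by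
  set F : ℝ → ℝ := fun t => ((m - 1 : ℝ))⁻¹ * ((d + 1 - t) ^ (-(m - 1 : ℤ))) with hF
  have hm1 : (0:ℝ) < (m:ℝ) - 1 := by
    have : (2:ℝ) ≤ (m:ℝ) := by exact_mod_cast hm
    linarith
  have hpos : ∀ t ∈ Icc (0:ℝ) 1, 0 < d + 1 - t := fun t ht => by
    have := ht.2; linarith
  have hderiv : ∀ t ∈ Icc (0:ℝ) 1, HasDerivAt F (((d + 1 - t) ^ m)⁻¹) t := by
    intro t ht
    have hne : d + 1 - t ≠ 0 := (hpos t ht).ne'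
    have hu : HasDerivAt (fun s : ℝ => d + 1 - s) (-1) t := by
      simpa using ((hasDerivAt_id t).const_sub (d+1))
    have hz : HasDerivAt (fun s : ℝ => (d + 1 - s) ^ (-(m - 1 : ℤ)))
        (((-(m - 1 : ℤ) : ℤ) : ℝ) * (d + 1 - t) ^ ((-(m - 1 : ℤ)) - 1) * (-1)) t := by
      have h0 := (hasDerivAt_zpow (-(m - 1 : ℤ)) (d + 1 - t) (Or.inl hne)).comp t hu
      exact h0
    have h2 := hz.const_mul ((m - 1 : ℝ))⁻¹
    refine h2.congr_deriv ?_
    have e1 : (-(m - 1 : ℤ)) - 1 = -(m : ℤ) := by omega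
    rw [e1, zpow_neg, zpow_natCast]
    push_cast
    have := hm1.ne'
    field_simp
  have hcont : ContinuousOn (fun t : ℝ => ((d + 1 - t) ^ m)⁻¹) (uIcc (0:ℝ) 1) := by
    rw [uIcc_of_le (by norm_num : (0:ℝ) ≤ 1)]
    exact ContinuousOn.inv₀ (by fun_prop) (fun t ht => pow_ne_zero _ (hpos t ht).ne')
  have hint : IntervalIntegrable (fun t : ℝ => ((d + 1 - t) ^ m)⁻¹) MeasureTheory.volume 0 1 :=
    hcont.intervalIntegrable
  have heq : (∫ t in (0:ℝ)..1, ((d + 1 - t) ^ m)⁻¹) = F 1 - F 0 := by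
    apply integral_eq_sub_of_hasDerivAt
    · intro t ht
      exact hderiv t (by rwa [uIcc_of_le (by norm_num : (0:ℝ) ≤ 1)] at ht)
    · exact hint
  rw [heq, hF]
  simp only
  have e0 : d + 1 - 1 = d := by ring
  have e1 : d + 1 - 0 = d + 1 := by ring
  rw [e0, e1]
  have h1 : (0:ℝ) ≤ (d + 1) ^ (-(m - 1 : ℤ)) := by positivity
  have h2 : (d : ℝ) ^ (-(m - 1 : ℤ)) = (d ^ (m-1))⁻¹ := by
    rw [zpow_neg]
    congr 1
    rw [← zpow_natCast]
    congr 1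
    omega
  rw [div_eq_inv_mul]
  nlinarith [inv_pos.mpr hm1, mul_le_mul_of_nonneg_left h1 (inv_pos.mpr hm1).le]

lemma sqrtIntble : IntervalIntegrable (fun t : ℝ => (1 - t) ^ (-(1/2) : ℝ))
    MeasureTheory.volume 0 1 := by
  have h := (intervalIntegrable_rpow' (a := 0) (b := 1) (by norm_num : (-1:ℝ) < -(1/2)))
  have h2 := (h.comp_sub_left 1).symm
  simpa using h2

lemma sqrtInt : (∫ t in (0:ℝ)..1, ((1 - t) : ℝ) ^ (-(1/2) : ℝ)) = 2 := by
  rw [intervalIntegral.integral_comp_sub_left (fun s : ℝ => s ^ (-(1/2) : ℝ)) 1]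
  norm_num
  rw [integral_rpow (Or.inl (by norm_num))]
  rw [Real.zero_rpow (by norm_num)]
  norm_num

set_option maxHeartbeats 2000000 in
/-- Lemma (Brendle, (iii)&(iv)): there is a non-decreasing function `h : [0,2] → [0,∞)` with
`h(t) → 0` as `t → 0⁺`, such that `|Y(x) + (x−y)/|x−y|^k| ≤ h(|x−y|)/|x−y|^{k−1}`
for all `y` on the unit sphere and `x` in the closed unit ball with `x ≠ y`. -/
theorem brendleY_error_bound (n k : ℕ) (hn : 1 ≤ n) (hk : 1 ≤ k) :
    ∃ h : ℝ → ℝ,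
      MonotoneOn h (Icc (0 : ℝ) 2) ∧
      (∀ t ∈ Icc (0 : ℝ) 2, 0 ≤ h t) ∧
      Tendsto h (nhdsWithin 0 (Ioi 0)) (nhds 0) ∧
      ∀ y : EuclideanSpace ℝ (Fin n), ‖y‖ = 1 →
        ∀ x ∈ closedBall (0 : EuclideanSpace ℝ (Fin n)) 1, x ≠ y →
          ‖brendleY n k y x + (‖x - y‖ ^ k)⁻¹ • (x - y)‖ ≤
            h ‖x - y‖ / ‖x - y‖ ^ (k - 1) := by
  classical
  set C : ℝ := 4 ^ k + 4 with hCdef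
  have hC0 : (0:ℝ) < C := by positivity
  refine ⟨fun t => C * Real.sqrt t, ?_, ?_, ?_, ?_⟩
  · intro a _ b _ hab
    exact mul_le_mul_of_nonneg_left (Real.sqrt_le_sqrt hab) hC0.le
  · intro t _; positivity
  · have h1 : Tendsto (fun t : ℝ => C * Real.sqrt t) (nhds 0) (nhds 0) := by
      have := (Real.continuous_sqrt.tendsto 0).const_mul C
      simpa using this
    exact h1.mono_left nhdsWithin_le_nhds
  · intro y hy x hx hxy
    have hx1 : ‖x‖ ≤ 1 := by simpa [mem_closedBall, dist_zero_right] using hx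
    set d : ℝ := ‖x - y‖ with hddef
    have hd : 0 < d := norm_pos_iff.mpr (sub_ne_zero.mpr hxy)
    have hd2 : d ≤ 2 := by
      calc d ≤ ‖x‖ + ‖y‖ := norm_sub_le _ _
        _ ≤ 2 := by rw [hy]; linarith
    have hsd : Real.sqrt d * Real.sqrt d = d := Real.mul_self_sqrt hd.le
    have hsd0 : 0 < Real.sqrt d := Real.sqrt_pos.mpr hd
    have hsd2 : Real.sqrt d ≤ 2 := by
      have h4 : Real.sqrt d ≤ Real.sqrt 4 := Real.sqrt_le_sqrt (by linarith)
      have : Real.sqrt 4 = 2 := by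
        rw [show (4:ℝ) = 2 ^ 2 by norm_num, Real.sqrt_sq (by norm_num : (0:ℝ) ≤ 2)]
      linarith
    have hd2s : d ≤ 2 * Real.sqrt d := by nlinarith
    -- lower bounds on ‖t • x - y‖
    have hlow : ∀ t ∈ Icc (0:ℝ) 1, d + (1 - t) ≤ 4 * ‖t • x - y‖ ∧ 1 - t ≤ ‖t • x - y‖ := by
      intro t ht
      have htx : ‖t • x‖ ≤ t := by
        rw [norm_smul, Real.norm_eq_abs, abs_of_nonneg ht.1]
        nlinarith [ht.1, hx1, norm_nonneg x]
      have h2 : ‖y‖ - ‖t • x‖ ≤ ‖t • x - y‖ := by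
        rw [norm_sub_rev]
        exact norm_sub_norm_le y (t • x)
      have hA : 1 - t ≤ ‖t • x - y‖ := by rw [hy] at h2; linarith
      have h3 : ‖x - t • x‖ ≤ 1 - t := by
        rw [show x - t • x = (1 - t) • x by rw [sub_smul, one_smul], norm_smul,
          Real.norm_eq_abs, abs_of_nonneg (by linarith [ht.2] : (0:ℝ) ≤ 1 - t)]
        nlinarith [ht.2, hx1, norm_nonneg x]
      have h4 : d ≤ ‖x - t • x‖ + ‖t • x - y‖ := by
        have := dist_triangle x (t • x) y
        simpa [dist_eq_norm] using this
      exact ⟨by linarith, hA⟩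
    have hne : ∀ t ∈ Icc (0:ℝ) 1, t • x - y ≠ 0 := by
      intro t ht h0
      have h1 := (hlow t ht).1
      rw [h0] at h1
      simp at h1
      have := ht.2
      linarith
    have hnpos : ∀ t ∈ Icc (0:ℝ) 1, 0 < ‖t • x - y‖ :=
      fun t ht => norm_pos_iff.mpr (hne t ht)
    -- the integrand
    set f : ℝ → EuclideanSpace ℝ (Fin n) := fun t => (‖t • x - y‖ ^ k)⁻¹ • (t • x - y) with hfdef
    have hc1 : Continuous fun t : ℝ => t • x - y := by fun_prop
    have hfc : ContinuousOn f (Icc (0:ℝ) 1) := by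
      apply ContinuousOn.fun_smul _ hc1.continuousOn
      exact ContinuousOn.inv₀ ((hc1.norm.pow k).continuousOn)
        (fun t ht => pow_ne_zero _ (hnpos t ht).ne')
    have hfi : IntervalIntegrable f MeasureTheory.volume 0 1 := by
      apply ContinuousOn.intervalIntegrable
      rwa [uIcc_of_le (by norm_num : (0:ℝ) ≤ 1)]
    have hnf : ∀ t ∈ Icc (0:ℝ) 1, ‖f t‖ = (‖t • x - y‖ ^ (k-1))⁻¹ := by
      intro t ht
      have h0 : ‖t • x - y‖ ≠ 0 := (hnpos t ht).ne'
      rw [hfdef]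
      simp only
      rw [norm_smul, norm_inv, norm_pow, norm_norm]
      have hkk : ‖t • x - y‖ ^ k = ‖t • x - y‖ ^ (k-1) * ‖t • x - y‖ := by
        conv_lhs => rw [show k = (k-1)+1 by omega]
        rw [pow_succ]
      rw [hkk]
      field_simp
    set I : EuclideanSpace ℝ (Fin n) := ∫ t in (0:ℝ)..1, f t with hIdef
    have hrw : brendleY n k y x + (‖x - y‖ ^ k)⁻¹ • (x - y)
        = (2:ℝ)⁻¹ • x - (((k:ℝ) - 2) / 2) • I := by
      simp only [brendleY, hIdef, hfdef]
      abel
    rw [hrw]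
    simp only
    -- case split on k
    rcases Nat.lt_or_ge k 3 with hk3 | hk3
    · interval_cases k
      · -- k = 1
        have hCnum : C = 8 := by rw [hCdef]; norm_num
        set g : ℝ → EuclideanSpace ℝ (Fin n) := fun _ => -y with hgdef
        have hgi : IntervalIntegrable g MeasureTheory.volume 0 1 :=
          intervalIntegrable_const
        have hIg : (∫ t in (0:ℝ)..1, g t) = -y := by simp [hgdef]
        have hnint : IntervalIntegrable (fun t => ‖f t - g t‖) MeasureTheory.volume 0 1 := by
          apply ContinuousOn.intervalIntegrable
          rw [uIcc_of_le (by norm_num : (0:ℝ) ≤ 1)]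
          exact (hfc.sub continuousOn_const).norm
        have hbint : IntervalIntegrable
            (fun t : ℝ => 2 * Real.sqrt d * (1-t) ^ (-(1/2):ℝ)) MeasureTheory.volume 0 1 :=
          sqrtIntble.const_mul _
        have hpt : ∀ t ∈ Ico (0:ℝ) 1, ‖f t - g t‖ ≤ 2 * Real.sqrt d * (1-t) ^ (-(1/2):ℝ) := by
          intro t ht
          have ht' : t ∈ Icc (0:ℝ) 1 := ⟨ht.1, ht.2.le⟩
          have hs : 0 < 1 - t := by linarith [ht.2]
          set a : EuclideanSpace ℝ (Fin n) := t • x - y with hadef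
          set b : EuclideanSpace ℝ (Fin n) := (t - 1) • y with hbdef
          have hbn : ‖b‖ = 1 - t := by
            rw [hbdef, norm_smul, Real.norm_eq_abs,
              abs_of_nonpos (by linarith [ht.2.le] : t - 1 ≤ 0), hy]
            ring
          have hbne : b ≠ 0 := by
            intro h0; rw [h0, norm_zero] at hbn; linarith
          have hane : a ≠ 0 := hne t ht'
          have hub : ‖b‖⁻¹ • b = -y := by
            rw [hbn, hbdef, smul_smul]
            rw [show (1 - t)⁻¹ * (t - 1) = -1 by field_simp; ring, neg_one_smul]
          have hfa : f t = ‖a‖⁻¹ • a := by rw [hfdef]; simp [hadef, pow_one]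
          have habd : ‖a - b‖ ≤ d := by
            have e : a - b = t • (x - y) := by
              rw [hadef, hbdef, smul_sub, sub_smul, one_smul]; abel
            rw [e, norm_smul, Real.norm_eq_abs, abs_of_nonneg ht.1]
            nlinarith [ht.2.le, norm_nonneg (x - y), hd]
          have hmain := (unitDiff a b hane hbne).trans
            (by gcongr : 2 * ‖a - b‖ / ‖a‖ ≤ 2 * d / ‖a‖)
          rw [hub] at hmain
          have hfg1 : ‖f t - g t‖ ≤ 2 * d / ‖a‖ := by
            rw [hfa, hgdef]; exact hmain
          have halow : 1 - t ≤ ‖a‖ := (hlow t ht').2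
          have hfg2 : ‖f t - g t‖ ≤ 2 := by
            rw [hfa, hgdef]
            simp only [sub_neg_eq_add]
            calc ‖‖a‖⁻¹ • a + y‖ ≤ ‖‖a‖⁻¹ • a‖ + ‖y‖ := norm_add_le _ _
              _ ≤ 2 := by
                  rw [norm_smul, norm_inv, norm_norm, hy,
                    inv_mul_cancel₀ (norm_pos_iff.mpr hane).ne']
                  norm_num
          have hrpow : ((1 - t : ℝ)) ^ (-(1/2):ℝ) = (Real.sqrt (1-t))⁻¹ := by
            rw [Real.rpow_neg hs.le, ← Real.sqrt_eq_rpow]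
          have hss : Real.sqrt (1-t) * Real.sqrt (1-t) = 1 - t := Real.mul_self_sqrt hs.le
          have hss0 : 0 < Real.sqrt (1-t) := Real.sqrt_pos.mpr hs
          rw [hrpow]
          rcases le_or_gt d (1-t) with hds | hds
          · have h3 : 2 * d / ‖a‖ ≤ 2 * d / (1-t) := by
              gcongr
            have h5 : Real.sqrt d ≤ Real.sqrt (1-t) := Real.sqrt_le_sqrt hds
            have h4 : 2 * d / (1-t) ≤ 2 * Real.sqrt d * (Real.sqrt (1-t))⁻¹ := by
              rw [show 2 * Real.sqrt d * (Real.sqrt (1-t))⁻¹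
                  = 2 * Real.sqrt d / Real.sqrt (1-t) by ring,
                div_le_div_iff₀ hs hss0]
              nlinarith [mul_le_mul_of_nonneg_left h5
                (mul_nonneg hsd0.le hss0.le), hsd, hss]
            linarith [hfg1, h3, h4]
          · have h5 : Real.sqrt (1-t) ≤ Real.sqrt d := Real.sqrt_le_sqrt hds.le
            have h6 : (2:ℝ) ≤ 2 * Real.sqrt d * (Real.sqrt (1-t))⁻¹ := by
              rw [show 2 * Real.sqrt d * (Real.sqrt (1-t))⁻¹
                  = 2 * (Real.sqrt d / Real.sqrt (1-t)) by ring]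
              have : (1:ℝ) ≤ Real.sqrt d / Real.sqrt (1-t) := (one_le_div hss0).mpr h5
              linarith
            linarith [hfg2, h6]
        have hae : ∀ᵐ t ∂(MeasureTheory.volume.restrict (Icc (0:ℝ) 1)),
            (fun t => ‖f t - g t‖) t ≤ (fun t : ℝ => 2 * Real.sqrt d * (1-t) ^ (-(1/2):ℝ)) t := by
          rw [MeasureTheory.ae_restrict_iff' measurableSet_Icc]
          have hone : ∀ᵐ t : ℝ ∂MeasureTheory.volume, t ≠ 1 := by
            rw [MeasureTheory.ae_iff]
            have h0 : MeasureTheory.volume ({(1:ℝ)} : Set ℝ) = 0 :=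
              MeasureTheory.measure_singleton 1
            convert h0 using 2
            ext t; simp
          filter_upwards [hone] with t ht1 htIcc
          exact hpt t ⟨htIcc.1, lt_of_le_of_ne htIcc.2 ht1⟩
        have hIbound : ‖I - -y‖ ≤ 4 * Real.sqrt d := by
          have e1 : I - -y = ∫ t in (0:ℝ)..1, (f t - g t) := by
            rw [intervalIntegral.integral_sub hfi hgi, hIg]
          rw [e1]
          calc ‖∫ t in (0:ℝ)..1, (f t - g t)‖ ≤ ∫ t in (0:ℝ)..1, ‖f t - g t‖ :=
              intervalIntegral.norm_integral_le_integral_norm (by norm_num)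
            _ ≤ ∫ t in (0:ℝ)..1, 2 * Real.sqrt d * (1-t) ^ (-(1/2):ℝ) :=
              intervalIntegral.integral_mono_ae_restrict (by norm_num) hnint hbint hae
            _ = 2 * Real.sqrt d * ∫ t in (0:ℝ)..1, ((1-t):ℝ) ^ (-(1/2):ℝ) :=
              intervalIntegral.integral_const_mul _ _
            _ = 4 * Real.sqrt d := by rw [sqrtInt]; ring
        have e3 : (2:ℝ)⁻¹ • x - ((((1:ℕ):ℝ) - 2) / 2) • I
            = (2:ℝ)⁻¹ • ((x - y) + (I - -y)) := by
          have ec : ((((1:ℕ):ℝ) - 2) / 2) = -(2:ℝ)⁻¹ := by push_cast; norm_num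
          rw [ec]
          module
        rw [e3]
        have e4 : ‖(2:ℝ)⁻¹ • ((x - y) + (I - -y))‖
            ≤ 2⁻¹ * (d + 4 * Real.sqrt d) := by
          rw [norm_smul, norm_inv, Real.norm_ofNat]
          have := norm_add_le (x - y) (I - -y)
          have h7 : ‖x - y‖ = d := rfl
          nlinarith [hIbound, norm_nonneg ((x-y) + (I - -y))]
        have e5 : d ^ (1 - 1) = (1:ℝ) := by norm_num
        rw [e5, div_one, hCnum]
        calc ‖(2:ℝ)⁻¹ • ((x - y) + (I - -y))‖ ≤ 2⁻¹ * (d + 4 * Real.sqrt d) := e4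
          _ ≤ 8 * Real.sqrt d := by linarith [hd2s]
      · -- k = 2
        have e0 : (((2:ℕ):ℝ) - 2) / 2 = 0 := by norm_num
        rw [e0, zero_smul, sub_zero]
        have h1 : ‖(2:ℝ)⁻¹ • x‖ ≤ 2⁻¹ := by
          rw [norm_smul]
          simp only [norm_inv, Real.norm_ofNat]
          nlinarith [hx1]
        rw [pow_one, le_div_iff₀ hd]
        have h2 := mul_le_mul_of_nonneg_right h1 hd.le
        have hC20 : C = 20 := by rw [hCdef]; norm_num
        rw [hC20]
        linarith [h2, hd2s, hsd0.le]
    · -- k ≥ 3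
      set m : ℕ := k - 1 with hmdef
      have hm2 : 2 ≤ m := by omega
      have hmcast : (m:ℝ) = (k:ℝ) - 1 := by
        rw [hmdef]; push_cast [Nat.cast_sub hk]; ring
      have hmk : (m:ℝ) - 1 = (k:ℝ) - 2 := by rw [hmcast]; ring
      have hm1pos : (0:ℝ) < (m:ℝ) - 1 := by
        have : (2:ℝ) ≤ (m:ℝ) := by exact_mod_cast hm2
        linarith
      have hcoef : (0:ℝ) ≤ ((k:ℝ) - 2) / 2 := by rw [← hmk]; linarith
      have hfb : ∀ t ∈ Icc (0:ℝ) 1, ‖f t‖ ≤ 4 ^ m * ((d + 1 - t) ^ m)⁻¹ := by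
        intro t ht
        rw [hnf t ht]
        have hpos1 : 0 < d + 1 - t := by have := ht.2; linarith
        have h1 := (hlow t ht).1
        have ha := hnpos t ht
        have h2 : (d + 1 - t) ^ m ≤ 4 ^ m * ‖t • x - y‖ ^ m := by
          calc (d + 1 - t) ^ m ≤ (4 * ‖t • x - y‖) ^ m :=
              pow_le_pow_left₀ hpos1.le (by linarith) m
            _ = 4 ^ m * ‖t • x - y‖ ^ m := mul_pow _ _ _
        have h3 : (0:ℝ) < (d + 1 - t) ^ m := by positivity
        have h4 : (0:ℝ) < ‖t • x - y‖ ^ m := by positivity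
        rw [← div_eq_mul_inv, le_div_iff₀ h3]
        calc (‖t • x - y‖ ^ (k-1))⁻¹ * (d + 1 - t) ^ m
            = (‖t • x - y‖ ^ m)⁻¹ * (d + 1 - t) ^ m := by rw [hmdef]
          _ ≤ (‖t • x - y‖ ^ m)⁻¹ * (4 ^ m * ‖t • x - y‖ ^ m) :=
              mul_le_mul_of_nonneg_left h2 (by positivity)
          _ = 4 ^ m := by field_simp
      have hgint : IntervalIntegrable (fun t : ℝ => 4 ^ m * ((d + 1 - t) ^ m)⁻¹)
          MeasureTheory.volume 0 1 := by
        apply ContinuousOn.intervalIntegrable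
        rw [uIcc_of_le (by norm_num : (0:ℝ) ≤ 1)]
        apply ContinuousOn.mul continuousOn_const
        exact ContinuousOn.inv₀ (by fun_prop)
          (fun t ht => pow_ne_zero _
            (show d + 1 - t ≠ 0 by
              have h := ht.2
              have h2 : (0:ℝ) < d + 1 - t := by linarith
              exact h2.ne'))
      have hfnint : IntervalIntegrable (fun t => ‖f t‖) MeasureTheory.volume 0 1 := by
        apply ContinuousOn.intervalIntegrable
        rw [uIcc_of_le (by norm_num : (0:ℝ) ≤ 1)]
        exact hfc.norm
      have hInorm : ‖I‖ ≤ 4 ^ m * ((d ^ (m-1))⁻¹ / ((m:ℝ) - 1)) := by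
        calc ‖I‖ ≤ ∫ t in (0:ℝ)..1, ‖f t‖ :=
            intervalIntegral.norm_integral_le_integral_norm (by norm_num)
          _ ≤ ∫ t in (0:ℝ)..1, 4 ^ m * ((d + 1 - t) ^ m)⁻¹ :=
            intervalIntegral.integral_mono_on (by norm_num) hfnint hgint hfb
          _ = 4 ^ m * ∫ t in (0:ℝ)..1, ((d + 1 - t) ^ m)⁻¹ :=
            intervalIntegral.integral_const_mul _ _
          _ ≤ 4 ^ m * ((d ^ (m-1))⁻¹ / ((m:ℝ) - 1)) :=
            mul_le_mul_of_nonneg_left (intBound m hm2 d hd) (by positivity)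
      have key1 : ((k:ℝ) - 2) / 2 * ‖I‖ ≤ 4 ^ m * (d ^ (m-1))⁻¹ / 2 := by
        have e : ((k:ℝ) - 2) / 2 * (4 ^ m * ((d ^ (m-1))⁻¹ / ((m:ℝ) - 1)))
            = 4 ^ m * (d ^ (m-1))⁻¹ / 2 := by
          rw [← hmk]; field_simp
        calc ((k:ℝ) - 2) / 2 * ‖I‖
            ≤ ((k:ℝ) - 2) / 2 * (4 ^ m * ((d ^ (m-1))⁻¹ / ((m:ℝ) - 1))) :=
              mul_le_mul_of_nonneg_left hInorm hcoef
          _ = 4 ^ m * (d ^ (m-1))⁻¹ / 2 := e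
      have hgoal1 : ‖(2:ℝ)⁻¹ • x - (((k:ℝ) - 2) / 2) • I‖
          ≤ 2⁻¹ + ((k:ℝ) - 2) / 2 * ‖I‖ := by
        calc ‖(2:ℝ)⁻¹ • x - (((k:ℝ) - 2) / 2) • I‖
            ≤ ‖(2:ℝ)⁻¹ • x‖ + ‖(((k:ℝ) - 2) / 2) • I‖ := norm_sub_le _ _
          _ ≤ 2⁻¹ + ((k:ℝ) - 2) / 2 * ‖I‖ := by
              rw [norm_smul, norm_smul, norm_inv, Real.norm_ofNat, Real.norm_eq_abs,
                abs_of_nonneg hcoef]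
              nlinarith [hx1]
      rw [le_div_iff₀ (pow_pos hd (k-1))]
      have hC4 : C = 4 * 4 ^ m + 4 := by
        rw [hCdef, show k = m + 1 by omega, pow_succ]; ring
      have hdm1 : d ^ m = d ^ (m-1) * d := by
        conv_lhs => rw [show m = (m-1) + 1 by omega]
        rw [pow_succ]
      have hBdm : (d ^ (m-1))⁻¹ * d ^ m = d := by
        rw [hdm1]; field_simp
      have hdmle : d ^ m ≤ 2 ^ (m-1) * d := by
        rw [hdm1]
        exact mul_le_mul_of_nonneg_right (pow_le_pow_left₀ hd.le hd2 _) hd.le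
      have h2m : (2:ℝ) ^ (m-1) ≤ 4 ^ m := by
        calc (2:ℝ) ^ (m-1) ≤ 2 ^ m := pow_le_pow_right₀ (by norm_num) (by omega)
          _ ≤ 4 ^ m := pow_le_pow_left₀ (by norm_num) (by norm_num) m
      have hdk : d ^ (k-1) = d ^ m := by rw [hmdef]
      rw [hdk]
      calc ‖(2:ℝ)⁻¹ • x - (((k:ℝ) - 2) / 2) • I‖ * d ^ m
          ≤ (2⁻¹ + 4 ^ m * (d ^ (m-1))⁻¹ / 2) * d ^ m := by
            apply mul_le_mul_of_nonneg_right _ (pow_pos hd m).le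
            linarith [hgoal1, key1]
        _ = d ^ m / 2 + 4 ^ m * ((d ^ (m-1))⁻¹ * d ^ m) / 2 := by ring
        _ = d ^ m / 2 + 4 ^ m * d / 2 := by rw [hBdm]
        _ ≤ 2 ^ (m-1) * d / 2 + 4 ^ m * d / 2 := by linarith [hdmle]
        _ ≤ 4 ^ m * d := by nlinarith [mul_le_mul_of_nonneg_right h2m hd.le]
        _ ≤ 4 ^ m * (2 * Real.sqrt d) := by
            apply mul_le_mul_of_nonneg_left hd2s (by positivity)
        _ ≤ C * Real.sqrt d := by
            rw [hC4]
            have h8 : (0:ℝ) ≤ 4 ^ m := by positivity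
            nlinarith [hsd0.le]
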